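/- Fix s > 0, t > 0, and n ≥ 1, and let f_n : (ℕ → ℝ) → ℝ be f_n(x) = (1/n) ∑_{k < n} (x_k² - s). Then for every x : ℕ → ℝ, the heat operator on this function satisfies the pointwise identity ∫ f_n(x + y) dγ_t^∞(y) = f_n(x) + t. (Consequently, as n → ∞, f_n → 0 in L²(γ_s^∞) while the heat operator applied to f_n converges to the constant t, exhibiting the nonclosability of the heat operator.) -/

import Mathlib

open MeasureTheory ProbabilityTheory

/-- `IsGaussianProductMeasure r μ` says that `μ` is the countable product probability measure
`⨂_{n ∈ ℕ} gaussianReal 0 r` on `ℕ → ℝ`, characterized by the property that all of its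
finite-dimensional marginals are the corresponding finite products of centered Gaussians of
variance `r`. -/
def IsGaussianProductMeasure (r : ℝ) (μ : Measure (ℕ → ℝ)) : Prop :=
  IsProbabilityMeasure μ ∧
    ∀ n : ℕ, μ.map (fun x (i : Fin n) => x (i : ℕ)) =
      Measure.pi (fun _ : Fin n => gaussianReal 0 r.toNNReal)

open Real Filter Set
open scoped NNReal ENNReal

section Aux

lemma integrable_sq_exp {b : ℝ} (hb : 0 < b) :
    Integrable fun x : ℝ => x ^ 2 * rexp (-b * x ^ 2) := by
  have h := integrable_rpow_mul_exp_neg_mul_sq hb (s := ((2 : ℕ) : ℝ)) (by norm_num)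
  simpa [Real.rpow_natCast] using h

lemma integrable_id_exp {b : ℝ} (hb : 0 < b) :
    Integrable fun x : ℝ => x * rexp (-b * x ^ 2) := by
  have h := integrable_rpow_mul_exp_neg_mul_sq hb (s := ((1 : ℕ) : ℝ)) (by norm_num)
  simpa [Real.rpow_natCast] using h

lemma integral_id_exp {b : ℝ} (hb : 0 < b) :
    ∫ x : ℝ, x * rexp (-b * x ^ 2) = 0 := by
  have h := integral_neg_eq_self (fun x : ℝ => x * rexp (-b * x ^ 2)) volume
  simp only [neg_sq, neg_mul] at h
  rw [integral_neg] at h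
  have h2 : ∫ x : ℝ, x * rexp (-(b * x ^ 2)) = 0 := by linarith
  simpa [neg_mul] using h2

lemma integral_sq_exp {b : ℝ} (hb : 0 < b) :
    ∫ x : ℝ, x ^ 2 * rexp (-b * x ^ 2) = √(π / b) / (2 * b) := by
  set F : ℝ → ℝ := fun x => x * rexp (-b * x ^ 2) with hF
  set F' : ℝ → ℝ := fun x => rexp (-b * x ^ 2) - 2 * b * (x ^ 2 * rexp (-b * x ^ 2)) with hF'
  have hderiv : ∀ x : ℝ, HasDerivAt F (F' x) x := by
    intro x
    have h1 : HasDerivAt (fun x : ℝ => -b * x ^ 2) (-b * (2 * x)) x := by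
      simpa [mul_comm] using (hasDerivAt_pow 2 x).const_mul (-b)
    have h2 := h1.exp
    have h3 : HasDerivAt (fun y : ℝ => id y * rexp (-b * y ^ 2))
        (1 * rexp (-b * x ^ 2) + id x * (rexp (-b * x ^ 2) * (-b * (2 * x)))) x :=
      (hasDerivAt_id x).fun_mul h2
    convert h3 using 1
    · rfl
    simp only [hF', id_eq, one_mul]
    ring
  have hint' : Integrable F' := by
    exact (integrable_exp_neg_mul_sq hb).sub ((integrable_sq_exp hb).const_mul (2 * b))
  have htop : Tendsto F atTop (nhds 0) := by
    have h := rpow_mul_exp_neg_mul_sq_isLittleO_exp_neg hb 1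
    have h2 : Tendsto (fun x : ℝ => rexp (-(1 / 2) * x)) atTop (nhds 0) := by
      apply Real.tendsto_exp_atBot.comp
      apply Tendsto.const_mul_atTop_of_neg (by norm_num : (-(1/2) : ℝ) < 0) tendsto_id
    have h3 := h.tendsto_zero_of_tendsto h2
    refine h3.congr' ?_
    filter_upwards [eventually_gt_atTop (0 : ℝ)] with x hx
    rw [Real.rpow_one]
  have hbot : Tendsto F atBot (nhds 0) := by
    have h := (htop.comp tendsto_neg_atBot_atTop).neg
    refine h.congr' ?_ |>.mono_right (by simp)
    filter_upwards with x
    simp only [Function.comp_apply, hF]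
    ring_nf
  have hIoi : ∫ x in Ioi (0 : ℝ), F' x = 0 - F 0 :=
    integral_Ioi_of_hasDerivAt_of_tendsto' (fun x _ => hderiv x) hint'.integrableOn htop
  have hIic : ∫ x in Iic (0 : ℝ), F' x = F 0 - 0 :=
    integral_Iic_of_hasDerivAt_of_tendsto' (fun x _ => hderiv x) hint'.integrableOn hbot
  have hzero : ∫ x : ℝ, F' x = 0 := by
    rw [← intervalIntegral.integral_Iic_add_Ioi hint'.integrableOn hint'.integrableOn,
      hIoi, hIic]
    ring
  have hsub : ∫ x : ℝ, F' x
      = √(π / b) - 2 * b * ∫ x : ℝ, x ^ 2 * rexp (-b * x ^ 2) := by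
    rw [hF']
    rw [integral_sub (integrable_exp_neg_mul_sq hb) ((integrable_sq_exp hb).const_mul (2 * b)),
      integral_gaussian, integral_const_mul]
  have hb' : (2 : ℝ) * b ≠ 0 := by positivity
  rw [hzero] at hsub
  field_simp at hsub ⊢
  linarith

lemma gaussianPDFReal_eq (v : ℝ≥0) (x : ℝ) :
    gaussianPDFReal 0 v x = (√(2 * π * v))⁻¹ * rexp (-(2 * (v:ℝ))⁻¹ * x ^ 2) := by
  rw [gaussianPDFReal]
  congr 1
  rw [sub_zero, neg_div, div_eq_inv_mul, neg_mul]

lemma integral_gaussianReal_poly {v : ℝ≥0} (hv : v ≠ 0) (a c : ℝ) :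
    ∫ u, ((a + u) ^ 2 - c) ∂(gaussianReal 0 v) = a ^ 2 - c + v := by
  have hvpos : (0 : ℝ) < v := lt_of_le_of_ne v.coe_nonneg (by exact_mod_cast hv.symm)
  set b : ℝ := (2 * (v : ℝ))⁻¹ with hbdef
  have hbpos : 0 < b := by positivity
  have hpdf : ∀ x, gaussianPDF 0 v x = ((gaussianPDFReal 0 v x).toNNReal : ℝ≥0∞) := fun x => rfl
  rw [gaussianReal_of_var_ne_zero 0 hv]
  have hmeas : Measurable fun x => (gaussianPDFReal 0 v x).toNNReal :=
    (measurable_gaussianPDFReal 0 v).real_toNNReal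
  rw [show volume.withDensity (gaussianPDF 0 v)
      = volume.withDensity (fun x => ((gaussianPDFReal 0 v x).toNNReal : ℝ≥0∞)) from rfl]
  rw [integral_withDensity_eq_integral_smul hmeas]
  have hsmul : ∀ x : ℝ, (gaussianPDFReal 0 v x).toNNReal • ((a + x) ^ 2 - c)
      = gaussianPDFReal 0 v x * ((a + x) ^ 2 - c) := by
    intro x
    rw [NNReal.smul_def, smul_eq_mul, Real.coe_toNNReal _ (gaussianPDFReal_nonneg 0 v x)]
  simp_rw [hsmul, gaussianPDFReal_eq]
  set C : ℝ := (√(2 * π * v))⁻¹ with hC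
  have hexpand : ∀ x : ℝ, C * rexp (-b * x ^ 2) * ((a + x) ^ 2 - c)
      = C * ((a ^ 2 - c) * rexp (-b * x ^ 2) + (2 * a) * (x * rexp (-b * x ^ 2))
        + x ^ 2 * rexp (-b * x ^ 2)) := by
    intro x; ring
  simp_rw [← hbdef, hexpand]
  rw [integral_const_mul]
  have i1 : Integrable (fun x : ℝ => (a ^ 2 - c) * rexp (-b * x ^ 2)) volume :=
    (integrable_exp_neg_mul_sq hbpos).const_mul _
  have i2 : Integrable (fun x : ℝ => (2 * a) * (x * rexp (-b * x ^ 2))) volume :=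
    (integrable_id_exp hbpos).const_mul _
  have i12 : Integrable
      (fun x : ℝ => (a ^ 2 - c) * rexp (-b * x ^ 2) + (2 * a) * (x * rexp (-b * x ^ 2)))
      volume := i1.add i2
  rw [integral_add i12 (integrable_sq_exp hbpos), integral_add i1 i2,
    integral_const_mul, integral_const_mul, integral_gaussian, integral_id_exp hbpos,
    integral_sq_exp hbpos]
  have hK : C * √(π / b) = 1 := by
    have h1 := integral_gaussianPDFReal_eq_one 0 hv
    simp_rw [gaussianPDFReal_eq] at h1
    rw [integral_const_mul, integral_gaussian] at h1
    exact h1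
  have h2b : 2 * b = (v : ℝ)⁻¹ := by
    rw [hbdef, mul_inv_rev]; field_simp
  have hCsq : C * (√(π / b) / (2 * b)) = v := by
    rw [mul_div_assoc']
    rw [hK]  -- careful: C * √(π/b) / (2*b)
    rw [h2b, one_div, inv_inv]
  calc C * ((a ^ 2 - c) * √(π / b) + 2 * a * 0 + √(π / b) / (2 * b))
      = (a ^ 2 - c) * (C * √(π / b)) + C * (√(π / b) / (2 * b)) := by ring
    _ = a ^ 2 - c + v := by rw [hK, hCsq]; ring

lemma integrable_gaussianReal_poly {v : ℝ≥0} (hv : v ≠ 0) (a c : ℝ) :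
    Integrable (fun u => (a + u) ^ 2 - c) (gaussianReal 0 v) := by
  have hvpos : (0 : ℝ) < v := lt_of_le_of_ne v.coe_nonneg (by exact_mod_cast hv.symm)
  set b : ℝ := (2 * (v : ℝ))⁻¹ with hbdef
  have hbpos : 0 < b := by positivity
  rw [gaussianReal_of_var_ne_zero 0 hv]
  have hmeas : AEMeasurable (fun x => (gaussianPDFReal 0 v x).toNNReal) volume :=
    (measurable_gaussianPDFReal 0 v).real_toNNReal.aemeasurable
  rw [show volume.withDensity (gaussianPDF 0 v)
      = volume.withDensity (fun x => ((gaussianPDFReal 0 v x).toNNReal : ℝ≥0∞)) from rfl]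
  rw [integrable_withDensity_iff_integrable_smul₀ hmeas]
  have hsmul : ∀ x : ℝ, (gaussianPDFReal 0 v x).toNNReal • ((a + x) ^ 2 - c)
      = (√(2 * π * v))⁻¹ * ((a ^ 2 - c) * rexp (-b * x ^ 2) + (2 * a) * (x * rexp (-b * x ^ 2))
        + x ^ 2 * rexp (-b * x ^ 2)) := by
    intro x
    rw [NNReal.smul_def, smul_eq_mul, Real.coe_toNNReal _ (gaussianPDFReal_nonneg 0 v x),
      gaussianPDFReal_eq]
    ring
  simp_rw [hsmul]
  exact ((((integrable_exp_neg_mul_sq hbpos).const_mul _).add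
    ((integrable_id_exp hbpos).const_mul _)).add (integrable_sq_exp hbpos)).const_mul _

lemma map_eval_pi {n : ℕ} (ν : Measure ℝ) [IsProbabilityMeasure ν] (k : Fin n) :
    (Measure.pi fun _ : Fin n => ν).map (fun z => z k) = ν := by
  ext s hs
  rw [Measure.map_apply (measurable_pi_apply k) hs]
  have : (fun z : Fin n → ℝ => z k) ⁻¹' s = Set.univ.pi (Function.update (fun _ => univ) k s) :=
    Set.eval_preimage
  rw [this, Measure.pi_pi]
  rw [Finset.prod_eq_single k]
  · simp
  · intro i _ hik
    simp [Function.update_of_ne hik]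
  · simp

end Aux

/-- For `f_n(x) = (1/n) ∑_{k<n} (x_k² - s)`, the heat operator (convolution with the
variance-`t` product Gaussian) satisfies `(e^{tΔ/2} f_n)(x) = f_n(x) + t` pointwise. -/
theorem heatOperator_on_fn
    (s t : ℝ) (hs : 0 < s) (ht : 0 < t) (n : ℕ) (hn : 1 ≤ n)
    (μt : Measure (ℕ → ℝ)) (hμt : IsGaussianProductMeasure t μt)
    (f : (ℕ → ℝ) → ℝ)
    (hf : f = fun x => (1 / (n : ℝ)) * ∑ k ∈ Finset.range n, (x k ^ 2 - s)) :
    ∀ x : ℕ → ℝ, ∫ y, f (x + y) ∂μt = f x + t := by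
  intro x
  obtain ⟨hprob, hmarg⟩ := hμt
  set v : ℝ≥0 := t.toNNReal with hvdef
  have hv : v ≠ 0 := by
    simp only [hvdef, ne_eq, Real.toNNReal_eq_zero, not_le]
    exact ht
  have hvt : (v : ℝ) = t := Real.coe_toNNReal t ht.le
  have hproj : Measurable fun y : ℕ → ℝ => fun i : Fin n => y (i : ℕ) :=
    measurable_pi_lambda _ fun i => measurable_pi_apply _
  set g : (Fin n → ℝ) → ℝ := fun z => (1 / (n : ℝ)) * ∑ k : Fin n, ((x (k : ℕ) + z k) ^ 2 - s)
    with hg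
  have hgcont : Continuous g := by
    apply Continuous.mul continuous_const
    exact continuous_finset_sum _ fun k _ =>
      (((continuous_const.add (continuous_apply k)).pow 2).sub continuous_const)
  have key : ∀ y : ℕ → ℝ, f (x + y) = g (fun i : Fin n => y (i : ℕ)) := by
    intro y
    simp only [hf, hg, Pi.add_apply]
    rw [Fin.sum_univ_eq_sum_range (fun k => ((x k + y k) ^ 2 - s)) n]
  have hπ := map_eval_pi (n := n) (gaussianReal 0 v)
  have step1 : ∫ y, f (x + y) ∂μt
      = ∫ z, g z ∂(Measure.pi fun _ : Fin n => gaussianReal 0 v) := by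
    simp_rw [key]
    rw [← hmarg n]
    exact (integral_map hproj.aemeasurable
      hgcont.aestronglyMeasurable).symm
  rw [step1]
  have hintk : ∀ k : Fin n,
      Integrable (fun z : Fin n → ℝ => (x (k : ℕ) + z k) ^ 2 - s)
        (Measure.pi fun _ : Fin n => gaussianReal 0 v) := by
    intro k
    have h1 : Integrable (fun u : ℝ => (x (k : ℕ) + u) ^ 2 - s) (gaussianReal 0 v) :=
      integrable_gaussianReal_poly hv _ _
    have h2 := (integrable_map_measure (by rw [hπ k]; exact h1.aestronglyMeasurable)
      (measurable_pi_apply k).aemeasurable).mp (by rw [hπ k]; exact h1)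
    exact h2
  have hvalk : ∀ k : Fin n,
      ∫ z, ((x (k : ℕ) + z k) ^ 2 - s) ∂(Measure.pi fun _ : Fin n => gaussianReal 0 v)
        = x (k : ℕ) ^ 2 - s + t := by
    intro k
    have h1 : Integrable (fun u : ℝ => (x (k : ℕ) + u) ^ 2 - s) (gaussianReal 0 v) :=
      integrable_gaussianReal_poly hv _ _
    have := integral_map (μ := Measure.pi fun _ : Fin n => gaussianReal 0 v)
      (φ := fun z => z k) (measurable_pi_apply k).aemeasurable
      (f := fun u : ℝ => (x (k : ℕ) + u) ^ 2 - s)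
      (by rw [hπ k]; exact h1.aestronglyMeasurable)
    rw [hπ k] at this
    rw [← this, integral_gaussianReal_poly hv, hvt]
  rw [hg]
  simp only
  rw [integral_const_mul, integral_finset_sum _ (fun k _ => hintk k)]
  simp_rw [hvalk]
  rw [Finset.sum_add_distrib, hf]
  have hn' : (n : ℝ) ≠ 0 := Nat.cast_ne_zero.mpr (by omega)
  simp only [Fin.sum_univ_eq_sum_range (fun k => (x k ^ 2 - s)) n, Finset.sum_const,
    Finset.card_univ, Fintype.card_fin, nsmul_eq_mul]
  field_simp
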